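/- For natural numbers n, p, q, c, d with c+d ≤ n, the sum over k from 0 to n of C(p+k,p)·C(q+n-k,q)·C(k,c)·C(n-k,d)·H(p+k)·H(q+n-k) equals C(n+p+q+1, n-c-d)·C(p+c,c)·C(q+d,d)·(H2(p+q+c+d+1) - H2(n+p+q+1) + (H(n+p+q+1) - H(p+q+c+d+1) + H(p+c))·(H(n+p+q+1) - H(p+q+c+d+1) + H(q+d))). -/

import Mathlib

noncomputable def H (m : ℕ) : ℚ := ∑ j ∈ Finset.range m, (1 : ℚ) / (j + 1)
noncomputable def H2 (m : ℕ) : ℚ := ∑ j ∈ Finset.range m, (1 : ℚ) / ((j : ℚ) + 1) ^ 2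

lemma H_succ (m : ℕ) : H (m+1) = H m + 1/((m:ℚ)+1) := by rw [H, H, Finset.sum_range_succ]
lemma H2_succ (m : ℕ) : H2 (m+1) = H2 m + 1/(((m:ℚ)+1))^2 := by rw [H2, H2, Finset.sum_range_succ]

structure R4 where
  a : ℚ
  b : ℚ
  c : ℚ
  d : ℚ

namespace R4
@[ext] theorem ext' {x y : R4} (ha : x.a = y.a) (hb : x.b = y.b) (hc : x.c = y.c)
    (hd : x.d = y.d) : x = y := by cases x; cases y; simp_all
instance : Zero R4 := ⟨⟨0,0,0,0⟩⟩
instance : One R4 := ⟨⟨1,0,0,0⟩⟩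
instance : Add R4 := ⟨fun x y => ⟨x.a+y.a, x.b+y.b, x.c+y.c, x.d+y.d⟩⟩
instance : Neg R4 := ⟨fun x => ⟨-x.a, -x.b, -x.c, -x.d⟩⟩
instance : Mul R4 := ⟨fun x y => ⟨x.a*y.a, x.a*y.b+x.b*y.a, x.a*y.c+x.c*y.a,
  x.a*y.d + x.b*y.c + x.c*y.b + x.d*y.a⟩⟩
@[simp] theorem zero_a : (0:R4).a = 0 := rfl
@[simp] theorem zero_b : (0:R4).b = 0 := rfl
@[simp] theorem zero_c : (0:R4).c = 0 := rfl
@[simp] theorem zero_d : (0:R4).d = 0 := rfl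
@[simp] theorem one_a : (1:R4).a = 1 := rfl
@[simp] theorem one_b : (1:R4).b = 0 := rfl
@[simp] theorem one_c : (1:R4).c = 0 := rfl
@[simp] theorem one_d : (1:R4).d = 0 := rfl
@[simp] theorem add_a (x y : R4) : (x+y).a = x.a+y.a := rfl
@[simp] theorem add_b (x y : R4) : (x+y).b = x.b+y.b := rfl
@[simp] theorem add_c (x y : R4) : (x+y).c = x.c+y.c := rfl
@[simp] theorem add_d (x y : R4) : (x+y).d = x.d+y.d := rfl
@[simp] theorem neg_a (x : R4) : (-x).a = -x.a := rfl
@[simp] theorem neg_b (x : R4) : (-x).b = -x.b := rfl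
@[simp] theorem neg_c (x : R4) : (-x).c = -x.c := rfl
@[simp] theorem neg_d (x : R4) : (-x).d = -x.d := rfl
@[simp] theorem mul_a (x y : R4) : (x*y).a = x.a*y.a := rfl
@[simp] theorem mul_b (x y : R4) : (x*y).b = x.a*y.b+x.b*y.a := rfl
@[simp] theorem mul_c (x y : R4) : (x*y).c = x.a*y.c+x.c*y.a := rfl
@[simp] theorem mul_d (x y : R4) : (x*y).d = x.a*y.d + x.b*y.c + x.c*y.b + x.d*y.a := rfl

instance : CommRing R4 where
  add_assoc x y z := by ext <;> simp <;> ring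
  zero_add x := by ext <;> simp
  add_zero x := by ext <;> simp
  add_comm x y := by ext <;> simp <;> ring
  neg_add_cancel x := by ext <;> simp
  mul_assoc x y z := by ext <;> simp <;> ring
  one_mul x := by ext <;> simp
  mul_one x := by ext <;> simp
  left_distrib x y z := by ext <;> simp <;> ring
  right_distrib x y z := by ext <;> simp <;> ring
  zero_mul x := by ext <;> simp
  mul_zero x := by ext <;> simp
  mul_comm x y := by ext <;> simp <;> ring
  nsmul := nsmulRec
  zsmul := zsmulRec

@[simp] theorem natCast_a (n : ℕ) : ((n:R4)).a = n := by
  induction n with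
  | zero => simp [Nat.cast_zero]
  | succ k ih => rw [Nat.cast_succ]; simp [ih]
@[simp] theorem natCast_b (n : ℕ) : ((n:R4)).b = 0 := by
  induction n with
  | zero => simp [Nat.cast_zero]
  | succ k ih => rw [Nat.cast_succ]; simp [ih]
@[simp] theorem natCast_c (n : ℕ) : ((n:R4)).c = 0 := by
  induction n with
  | zero => simp [Nat.cast_zero]
  | succ k ih => rw [Nat.cast_succ]; simp [ih]
@[simp] theorem natCast_d (n : ℕ) : ((n:R4)).d = 0 := by
  induction n with
  | zero => simp [Nat.cast_zero]
  | succ k ih => rw [Nat.cast_succ]; simp [ih]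
end R4

def asc {S : Type} [CommRing S] (x : S) : ℕ → S
  | 0 => 1
  | (j+1) => asc x j * (x + j)

@[simp] lemma asc_zero {S : Type} [CommRing S] (x : S) : asc x 0 = 1 := rfl
lemma asc_succ {S : Type} [CommRing S] (x : S) (j : ℕ) : asc x (j+1) = asc x j * (x + j) := rfl

noncomputable def PP (A : ℕ) : ℕ → ℚ
  | 0 => 1
  | (j+1) => PP A j * ((A:ℚ) + j + 1)

@[simp] lemma PP_zero (A : ℕ) : PP A 0 = 1 := rfl
lemma PP_succ (A j : ℕ) : PP A (j+1) = PP A j * ((A:ℚ) + j + 1) := rfl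

lemma ascX (A : ℕ) (j : ℕ) :
    asc (⟨(A:ℚ)+1,1,0,0⟩ : R4) j = ⟨PP A j, PP A j * (H (A+j) - H A), 0, 0⟩ := by
  induction j with
  | zero => ext <;> simp
  | succ j ih =>
    have hne : ((A:ℚ) + j + 1) ≠ 0 := by positivity
    have hH : H (A+(j+1)) = H (A+j) + 1/((A:ℚ)+j+1) := by
      rw [show A+(j+1) = (A+j)+1 from rfl, H_succ]
      push_cast
      ring
    rw [asc_succ, ih]
    refine R4.ext' ?_ ?_ ?_ ?_
    · simp only [R4.mul_a, R4.add_a, R4.natCast_a, PP_succ]; push_cast; ring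
    · simp only [R4.mul_b, R4.add_a, R4.add_b, R4.natCast_a, R4.natCast_b, PP_succ, hH]
      push_cast; field_simp; ring
    · simp
    · simp

lemma ascY (B : ℕ) (j : ℕ) :
    asc (⟨(B:ℚ)+1,0,1,0⟩ : R4) j = ⟨PP B j, 0, PP B j * (H (B+j) - H B), 0⟩ := by
  induction j with
  | zero => ext <;> simp
  | succ j ih =>
    have hne : ((B:ℚ) + j + 1) ≠ 0 := by positivity
    have hH : H (B+(j+1)) = H (B+j) + 1/((B:ℚ)+j+1) := by
      rw [show B+(j+1) = (B+j)+1 from rfl, H_succ]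
      push_cast
      ring
    rw [asc_succ, ih]
    refine R4.ext' ?_ ?_ ?_ ?_
    · simp only [R4.mul_a, R4.add_a, R4.natCast_a, PP_succ]; push_cast; ring
    · simp
    · simp only [R4.mul_c, R4.add_a, R4.add_c, R4.natCast_a, R4.natCast_c, PP_succ, hH]
      push_cast; field_simp; ring
    · simp

lemma ascXY (A B : ℕ) (m : ℕ) :
    asc (⟨(A:ℚ)+(B:ℚ)+2,1,1,0⟩ : R4) m =
      ⟨PP (A+B+1) m,
       PP (A+B+1) m * (H (A+B+1+m) - H (A+B+1)),
       PP (A+B+1) m * (H (A+B+1+m) - H (A+B+1)),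
       PP (A+B+1) m * ((H (A+B+1+m) - H (A+B+1))^2 - (H2 (A+B+1+m) - H2 (A+B+1)))⟩ := by
  induction m with
  | zero => ext <;> simp
  | succ m ih =>
    have hne : ((A:ℚ) + B + 1 + m + 1) ≠ 0 := by positivity
    have hH : H (A+B+1+(m+1)) = H (A+B+1+m) + 1/((A:ℚ)+B+1+m+1) := by
      rw [show A+B+1+(m+1) = (A+B+1+m)+1 from rfl, H_succ]
      push_cast
      ring
    have hH2 : H2 (A+B+1+(m+1)) = H2 (A+B+1+m) + 1/(((A:ℚ)+B+1+m+1))^2 := by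
      rw [show A+B+1+(m+1) = (A+B+1+m)+1 from rfl, H2_succ]
      push_cast
      ring
    rw [asc_succ, ih]
    refine R4.ext' ?_ ?_ ?_ ?_
    · simp only [R4.mul_a, R4.add_a, R4.natCast_a, PP_succ]; push_cast; ring
    · simp only [R4.mul_b, R4.add_a, R4.add_b, R4.natCast_a, R4.natCast_b, PP_succ, hH]
      push_cast; field_simp; ring
    · simp only [R4.mul_c, R4.add_a, R4.add_c, R4.natCast_a, R4.natCast_c, PP_succ, hH]
      push_cast; field_simp; ring
    · simp only [R4.mul_d, R4.add_a, R4.add_b, R4.add_c, R4.add_d, R4.natCast_a, R4.natCast_b,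
        R4.natCast_c, R4.natCast_d, PP_succ, hH, hH2]
      push_cast; field_simp; ring

lemma vand {S : Type} [CommRing S] (x y : S) (m : ℕ) :
    ∑ j ∈ Finset.range (m+1), (m.choose j : S) * asc x j * asc y (m-j) = asc (x+y) m := by
  induction m with
  | zero => simp
  | succ m ih =>
    have key : ∑ j ∈ Finset.range (m+2), ((m+1).choose j : S) * asc x j * asc y (m+1-j)
        = (x + y + m) * ∑ j ∈ Finset.range (m+1), (m.choose j : S) * asc x j * asc y (m-j) := by
      rw [Finset.sum_range_succ' _ (m+1)]
      simp only [Nat.succ_sub_succ, Nat.choose_zero_right, Nat.cast_one, Nat.sub_zero,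
        one_mul, asc_zero]
      have e1 : ∀ j ∈ Finset.range (m+1),
          ((m+1).choose (j+1) : S) * asc x (j+1) * asc y (m-j)
          = (m.choose j : S) * asc x j * asc y (m-j) * (x + j)
            + (m.choose (j+1) : S) * asc x (j+1) * asc y (m-j) := by
        intro j hj
        rw [Nat.choose_succ_succ]
        push_cast
        rw [asc_succ]
        ring
      rw [Finset.sum_congr rfl e1, Finset.sum_add_distrib, add_assoc]
      have h0 := Finset.sum_range_succ' (fun j => (m.choose j : S) * asc x j * asc y (m+1-j)) (m+1)
      simp only [Nat.succ_sub_succ, Nat.choose_zero_right, Nat.cast_one, Nat.sub_zero,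
        one_mul, asc_zero] at h0
      have hx : ∑ j ∈ Finset.range (m+1), (m.choose (j+1) : S) * asc x (j+1) * asc y (m-j)
          + asc y (m+1)
          = ∑ j ∈ Finset.range (m+1),
              (m.choose j : S) * asc x j * asc y (m-j) * (y + ((m-j : ℕ) : S)) := by
        rw [← h0, Finset.sum_range_succ, Nat.choose_succ_self]
        simp only [Nat.cast_zero, zero_mul, add_zero]
        refine Finset.sum_congr rfl fun j hj => ?_
        have hj' : j ≤ m := Nat.lt_succ_iff.mp (Finset.mem_range.mp hj)
        rw [show m + 1 - j = (m - j) + 1 by omega, asc_succ]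
        ring
      rw [hx, ← Finset.sum_add_distrib, Finset.mul_sum]
      refine Finset.sum_congr rfl fun j hj => ?_
      have hj' : j ≤ m := Nat.lt_succ_iff.mp (Finset.mem_range.mp hj)
      rw [Nat.cast_sub hj']
      ring
    rw [key, ih, asc_succ]
    push_cast
    ring
lemma PP_eq_choose (A j : ℕ) : PP A j = ((A+j).choose A : ℚ) * (Nat.factorial j : ℚ) := by
  induction j with
  | zero => simp
  | succ j ih =>
    have hnat : (A+j+1) * (A+j).choose A = (A+(j+1)).choose A * (j+1) := by
      have h2 : (A+(j+1)).choose A = (A+j+1).choose (j+1) := Nat.choose_symm_add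
      rw [Nat.choose_symm_add, h2]
      exact Nat.add_one_mul_choose_eq (A+j) j
    rw [PP_succ, ih, Nat.factorial_succ]
    have := congrArg (fun t : ℕ => (t : ℚ)) hnat
    push_cast at this ⊢
    nlinarith [this]

def R4.aHom : R4 →+ ℚ := { toFun := R4.a, map_zero' := rfl, map_add' := fun _ _ => rfl }
def R4.bHom : R4 →+ ℚ := { toFun := R4.b, map_zero' := rfl, map_add' := fun _ _ => rfl }
def R4.cHom : R4 →+ ℚ := { toFun := R4.c, map_zero' := rfl, map_add' := fun _ _ => rfl }
def R4.dHom : R4 →+ ℚ := { toFun := R4.d, map_zero' := rfl, map_add' := fun _ _ => rfl }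

lemma master (A B m : ℕ) :
    ∑ j ∈ Finset.range (m+1),
      (⟨(m.choose j : ℚ) * (PP A j) * (PP B (m-j)),
        (m.choose j : ℚ) * (PP A j * (H (A+j) - H A)) * (PP B (m-j)),
        (m.choose j : ℚ) * (PP A j) * (PP B (m-j) * (H (B+(m-j)) - H B)),
        (m.choose j : ℚ) * (PP A j * (H (A+j) - H A)) * (PP B (m-j) * (H (B+(m-j)) - H B))⟩ : R4)
    = ⟨PP (A+B+1) m,
       PP (A+B+1) m * (H (A+B+1+m) - H (A+B+1)),
       PP (A+B+1) m * (H (A+B+1+m) - H (A+B+1)),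
       PP (A+B+1) m * ((H (A+B+1+m) - H (A+B+1))^2 - (H2 (A+B+1+m) - H2 (A+B+1)))⟩ := by
  have V := vand (⟨(A:ℚ)+1,1,0,0⟩ : R4) (⟨(B:ℚ)+1,0,1,0⟩ : R4) m
  have hsum : (⟨(A:ℚ)+1,1,0,0⟩ : R4) + ⟨(B:ℚ)+1,0,1,0⟩ = ⟨(A:ℚ)+(B:ℚ)+2,1,1,0⟩ := by
    refine R4.ext' ?_ ?_ ?_ ?_ <;> simp <;> ring
  rw [hsum, ascXY] at V
  rw [← V]
  refine Finset.sum_congr rfl fun j hj => ?_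
  rw [ascX, ascY]
  refine R4.ext' ?_ ?_ ?_ ?_ <;> simp <;> ring

lemma E1 (A B m : ℕ) :
    ∑ j ∈ Finset.range (m+1), (m.choose j : ℚ) * (PP A j) * (PP B (m-j))
    = PP (A+B+1) m := by
  have := congrArg R4.aHom (master A B m)
  simpa [map_sum, R4.aHom] using this

lemma E2 (A B m : ℕ) :
    ∑ j ∈ Finset.range (m+1), (m.choose j : ℚ) * (PP A j * (H (A+j) - H A)) * (PP B (m-j))
    = PP (A+B+1) m * (H (A+B+1+m) - H (A+B+1)) := by
  have := congrArg R4.bHom (master A B m)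
  simpa [map_sum, R4.bHom] using this

lemma E3 (A B m : ℕ) :
    ∑ j ∈ Finset.range (m+1), (m.choose j : ℚ) * (PP A j) * (PP B (m-j) * (H (B+(m-j)) - H B))
    = PP (A+B+1) m * (H (A+B+1+m) - H (A+B+1)) := by
  have := congrArg R4.cHom (master A B m)
  simpa [map_sum, R4.cHom] using this

lemma E4 (A B m : ℕ) :
    ∑ j ∈ Finset.range (m+1),
      (m.choose j : ℚ) * (PP A j * (H (A+j) - H A)) * (PP B (m-j) * (H (B+(m-j)) - H B))
    = PP (A+B+1) m * ((H (A+B+1+m) - H (A+B+1))^2 - (H2 (A+B+1+m) - H2 (A+B+1))) := by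
  have := congrArg R4.dHom (master A B m)
  simpa [map_sum, R4.dHom] using this

lemma core (A B m : ℕ) :
    ∑ j ∈ Finset.range (m+1),
      ((A+j).choose A : ℚ) * ((B+(m-j)).choose B : ℚ) * H (A+j) * H (B+(m-j))
    = ((A+B+1+m).choose m : ℚ) *
        (H2 (A+B+1) - H2 (A+B+1+m) +
          (H (A+B+1+m) - H (A+B+1) + H A) * (H (A+B+1+m) - H (A+B+1) + H B)) := by
  have hfacne : ((m.factorial : ℚ)) ≠ 0 := by
    exact_mod_cast Nat.factorial_ne_zero m
  apply mul_left_cancel₀ hfacne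
  rw [Finset.mul_sum]
  have hfac : ∀ j ∈ Finset.range (m+1),
      (m.factorial : ℚ) * (((A+j).choose A : ℚ) * ((B+(m-j)).choose B : ℚ) * H (A+j) * H (B+(m-j)))
      = (m.choose j : ℚ) * (PP A j * (H (A+j) - H A)) * (PP B (m-j) * (H (B+(m-j)) - H B))
        + H B * ((m.choose j : ℚ) * (PP A j * (H (A+j) - H A)) * (PP B (m-j)))
        + H A * ((m.choose j : ℚ) * (PP A j) * (PP B (m-j) * (H (B+(m-j)) - H B)))
        + H A * H B * ((m.choose j : ℚ) * (PP A j) * (PP B (m-j))) := by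
    intro j hj
    have hj' : j ≤ m := Nat.lt_succ_iff.mp (Finset.mem_range.mp hj)
    have hch : ((m.choose j : ℚ)) * (j.factorial : ℚ) * ((m-j).factorial : ℚ) = (m.factorial : ℚ) := by
      exact_mod_cast congrArg (fun t : ℕ => (t:ℚ)) (Nat.choose_mul_factorial_mul_factorial hj')
    rw [PP_eq_choose A j, PP_eq_choose B (m-j)]
    linear_combination (((A+j).choose A : ℚ) * ((B+(m-j)).choose B : ℚ) * H (A+j) * H (B+(m-j))) * hch.symm
  rw [Finset.sum_congr rfl hfac]
  rw [Finset.sum_add_distrib, Finset.sum_add_distrib, Finset.sum_add_distrib,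
    ← Finset.mul_sum, ← Finset.mul_sum, ← Finset.mul_sum, E1, E2, E3, E4]
  have hU : PP (A+B+1) m = ((A+B+1+m).choose m : ℚ) * (m.factorial : ℚ) := by
    rw [PP_eq_choose, Nat.choose_symm_add]
  rw [hU]
  ring

lemma chooseSplit (p c k : ℕ) :
    ((p+k).choose p : ℚ) * (k.choose c : ℚ) = ((p+c).choose c : ℚ) * ((p+k).choose (p+c) : ℚ) := by
  rcases lt_or_ge k c with hk | hk
  · rw [Nat.choose_eq_zero_of_lt hk, Nat.choose_eq_zero_of_lt (by omega : p+k < p+c)]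
    simp
  · have e1 : ((p+k).choose p : ℚ) = ((p+k).factorial : ℚ) / ((p.factorial : ℚ) * (k.factorial : ℚ)) := by
      rw [Nat.cast_choose ℚ (Nat.le_add_right p k), show p+k-p = k by omega]
      all_goals push_cast; ring
    have e2 : (k.choose c : ℚ) = (k.factorial : ℚ) / ((c.factorial : ℚ) * ((k-c).factorial : ℚ)) := by
      rw [Nat.cast_choose ℚ hk]
      all_goals push_cast; ring
    have e3 : ((p+c).choose c : ℚ) = ((p+c).factorial : ℚ) / ((c.factorial : ℚ) * (p.factorial : ℚ)) := by
      rw [Nat.cast_choose ℚ (Nat.le_add_left c p), show p+c-c = p by omega]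
      all_goals push_cast; ring
    have e4 : ((p+k).choose (p+c) : ℚ) = ((p+k).factorial : ℚ) / (((p+c).factorial : ℚ) * ((k-c).factorial : ℚ)) := by
      rw [Nat.cast_choose ℚ (by omega : p+c ≤ p+k), show p+k-(p+c) = k-c by omega]
      all_goals push_cast; ring
    rw [e1, e2, e3, e4]
    have f1 : ((p.factorial : ℚ)) ≠ 0 := by exact_mod_cast Nat.factorial_ne_zero p
    have f2 : ((k.factorial : ℚ)) ≠ 0 := by exact_mod_cast Nat.factorial_ne_zero k
    have f3 : ((c.factorial : ℚ)) ≠ 0 := by exact_mod_cast Nat.factorial_ne_zero c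
    have f4 : (((k-c).factorial : ℚ)) ≠ 0 := by exact_mod_cast Nat.factorial_ne_zero (k-c)
    have f5 : (((p+c).factorial : ℚ)) ≠ 0 := by exact_mod_cast Nat.factorial_ne_zero (p+c)
    field_simp

theorem stmt_13 (n p q c d : ℕ) (h : c + d ≤ n) :
    ∑ k ∈ Finset.range (n + 1),
      ((p + k).choose p : ℚ) * (q + n - k).choose q * k.choose c * (n - k).choose d *
        H (p + k) * H (q + n - k) =
    ((n + p + q + 1).choose (n - c - d) : ℚ) * (p + c).choose c * (q + d).choose d *
      (H2 (p + q + c + d + 1) - H2 (n + p + q + 1) +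
        (H (n + p + q + 1) - H (p + q + c + d + 1) + H (p + c)) *
        (H (n + p + q + 1) - H (p + q + c + d + 1) + H (q + d))) := by
  obtain ⟨m, rfl⟩ : ∃ m, n = c + d + m := ⟨n - c - d, by omega⟩
  set n := c + d + m with hn
  have step1 : ∀ k ∈ Finset.range (n+1),
      ((p + k).choose p : ℚ) * (q + n - k).choose q * k.choose c * (n - k).choose d *
        H (p + k) * H (q + n - k)
      = ((p+c).choose c : ℚ) * ((q+d).choose d : ℚ) *
          (((p+k).choose (p+c) : ℚ) * ((q+(n-k)).choose (q+d) : ℚ) * H (p+k) * H (q+(n-k))) := by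
    intro k hk
    have hkn : k ≤ n := Nat.lt_succ_iff.mp (Finset.mem_range.mp hk)
    have hq : q + n - k = q + (n - k) := by omega
    rw [hq]
    have h1 := chooseSplit p c k
    have h2 := chooseSplit q d (n-k)
    linear_combination (((q+(n-k)).choose q : ℚ) * ((n-k).choose d : ℚ) * H (p+k) * H (q+(n-k))) * h1
      + (((p+c).choose c : ℚ) * ((p+k).choose (p+c) : ℚ) * H (p+k) * H (q+(n-k))) * h2
  rw [Finset.sum_congr rfl step1, ← Finset.mul_sum]
  have hsub : Finset.Ico c (c+m+1) ⊆ Finset.range (n+1) := by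
    intro k hk
    simp only [Finset.mem_Ico] at hk
    simp only [Finset.mem_range]
    omega
  have hzero : ∀ k ∈ Finset.range (n+1), k ∉ Finset.Ico c (c+m+1) →
      ((p+k).choose (p+c) : ℚ) * ((q+(n-k)).choose (q+d) : ℚ) * H (p+k) * H (q+(n-k)) = 0 := by
    intro k hk hk'
    have hkn : k ≤ n := Nat.lt_succ_iff.mp (Finset.mem_range.mp hk)
    simp only [Finset.mem_Ico, not_and, not_lt] at hk'
    rcases lt_or_ge k c with hc | hc
    · rw [Nat.choose_eq_zero_of_lt (by omega : p+k < p+c)]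
      simp
    · have : c + m + 1 ≤ k := hk' hc
      rw [Nat.choose_eq_zero_of_lt (by omega : q+(n-k) < q+d)]
      simp
  rw [← Finset.sum_subset hsub hzero, Finset.sum_Ico_eq_sum_range]
  have hmm : c + m + 1 - c = m + 1 := by omega
  rw [hmm]
  have step3 : ∀ j ∈ Finset.range (m+1),
      ((p+(c+j)).choose (p+c) : ℚ) * ((q+(n-(c+j))).choose (q+d) : ℚ) * H (p+(c+j)) * H (q+(n-(c+j)))
      = (((p+c)+j).choose (p+c) : ℚ) * (((q+d)+(m-j)).choose (q+d) : ℚ) * H ((p+c)+j) * H ((q+d)+(m-j)) := by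
    intro j hj
    have hj' : j ≤ m := Nat.lt_succ_iff.mp (Finset.mem_range.mp hj)
    have e1 : p+(c+j) = (p+c)+j := by omega
    have e2 : n-(c+j) = d+(m-j) := by omega
    have e3 : q+(d+(m-j)) = (q+d)+(m-j) := by omega
    rw [e1, e2, e3]
  rw [Finset.sum_congr rfl step3, core (p+c) (q+d) m]
  have r1 : n - c - d = m := by omega
  have r2 : n + p + q + 1 = (p+c)+(q+d)+1+m := by omega
  have r3 : p + q + c + d + 1 = (p+c)+(q+d)+1 := by omega
  rw [r1, r2, r3]
  ring
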